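/- Under the assumptions on P with all entries p_{i,n} > 0, the function F̃(x) = β_{ε₁(x),1} + ∑_{n=2}^∞ β̃_{ε_n(x),n} ∏_{j=1}^{n−1} p̃_{ε_j(x),j} (with β̃, p̃ using digit i for odd n and d_n−1−i for even n) is strictly increasing on [0,1], where x has the nega-(d_n) representation x = ∑_{n≥1} (−1)^{n+1}(1+ε_n(x))/(d₁⋯d_n). -/

import Mathlib

set_option linter.unusedSectionVars false
set_option maxHeartbeats 1000000


/-- The nega-(d_n) value of a digit sequence: ∑_{n≥1} (-1)^{n+1}(1+ε_n)/(d₁⋯d_n). -/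
noncomputable def negaVal (d : ℕ → ℕ) (ε : ℕ → ℕ) : ℝ :=
  ∑' n : ℕ, (-1 : ℝ) ^ (n + 2) * (1 + (ε (n + 1) : ℝ)) / ∏ j ∈ Finset.Icc 1 (n + 1), (d j : ℝ)

/-- ε is a nega-(d_n) representation of x. -/
def IsNegaRepr (d : ℕ → ℕ) (ε : ℕ → ℕ) (x : ℝ) : Prop :=
  (∀ n, 1 ≤ n → ε n < d n) ∧ x = negaVal d ε

/-- β_{i,n} = ∑_{t<i} p_{t,n}. -/
noncomputable def beta (p : ℕ → ℕ → ℝ) (i n : ℕ) : ℝ := ∑ t ∈ Finset.range i, p t n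

/-- p̃_{i,n}: digit i for odd n, digit d_n−1−i for even n. -/
noncomputable def ptil (d : ℕ → ℕ) (p : ℕ → ℕ → ℝ) (i n : ℕ) : ℝ :=
  if Odd n then p i n else p (d n - 1 - i) n

/-- β̃_{i,n}: β at digit i for odd n, at d_n−1−i for even n. -/
noncomputable def betatil (d : ℕ → ℕ) (p : ℕ → ℕ → ℝ) (i n : ℕ) : ℝ :=
  if Odd n then beta p i n else beta p (d n - 1 - i) n

/-- F̃ value on a digit sequence:
β_{ε₁,1} + ∑_{n≥2} β̃_{ε_n,n} ∏_{j<n} p̃_{ε_j,j}. -/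
noncomputable def Ftil (d : ℕ → ℕ) (p : ℕ → ℕ → ℝ) (ε : ℕ → ℕ) : ℝ :=
  beta p (ε 1) 1 +
    ∑' n : ℕ, betatil d p (ε (n + 2)) (n + 2) * ∏ j ∈ Finset.Icc 1 (n + 1), ptil d p (ε j) j

open Filter Finset


noncomputable def Dprod (d : ℕ → ℕ) (n : ℕ) : ℝ := ∏ j ∈ Finset.Icc 1 n, (d j : ℝ)

lemma Dprod_zero (d : ℕ → ℕ) : Dprod d 0 = 1 := by simp [Dprod]

lemma Dprod_succ (d : ℕ → ℕ) (n : ℕ) :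
    Dprod d (n + 1) = Dprod d n * d (n + 1) := by
  unfold Dprod
  rw [Finset.prod_Icc_succ_top (Nat.le_add_left 1 n)]

lemma Dprod_pos (d : ℕ → ℕ) (hd : ∀ n, 1 ≤ n → 2 ≤ d n) (n : ℕ) : 0 < Dprod d n := by
  induction n with
  | zero => simp [Dprod_zero]
  | succ n ih =>
    rw [Dprod_succ]
    have : (2:ℝ) ≤ d (n+1) := by exact_mod_cast hd (n+1) (Nat.le_add_left 1 n)
    positivity

lemma two_pow_le_Dprod (d : ℕ → ℕ) (hd : ∀ n, 1 ≤ n → 2 ≤ d n) (n : ℕ) :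
    (2:ℝ) ^ n ≤ Dprod d n := by
  induction n with
  | zero => simp [Dprod_zero]
  | succ n ih =>
    rw [Dprod_succ, pow_succ]
    have h2 : (2:ℝ) ≤ d (n+1) := by exact_mod_cast hd (n+1) (Nat.le_add_left 1 n)
    have := Dprod_pos d hd n
    nlinarith [pow_pos (show (0:ℝ) < 2 by norm_num) n]

lemma Dprod_mono (d : ℕ → ℕ) (hd : ∀ n, 1 ≤ n → 2 ≤ d n) {m n : ℕ} (h : m ≤ n) :
    Dprod d m ≤ Dprod d n := by
  induction n with
  | zero => simpa [Nat.le_zero.mp h]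
  | succ n ih =>
    rcases Nat.lt_or_ge m (n+1) with h' | h'
    · have := ih (Nat.lt_succ_iff.mp h')
      rw [Dprod_succ]
      have h2 : (2:ℝ) ≤ d (n+1) := by exact_mod_cast hd (n+1) (Nat.le_add_left 1 n)
      nlinarith [Dprod_pos d hd m, Dprod_pos d hd n]
    · have : m = n+1 := le_antisymm h h'
      simp [this]

/-- summand of negaVal -/
noncomputable def nterm (d : ℕ → ℕ) (ε : ℕ → ℕ) (k : ℕ) : ℝ :=
  (-1 : ℝ) ^ (k + 2) * (1 + (ε (k + 1) : ℝ)) / Dprod d (k + 1)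

lemma negaVal_eq_tsum (d : ℕ → ℕ) (ε : ℕ → ℕ) : negaVal d ε = ∑' k, nterm d ε k := rfl

lemma abs_nterm_le (d : ℕ → ℕ) (hd : ∀ n, 1 ≤ n → 2 ≤ d n) (ε : ℕ → ℕ)
    (hε : ∀ n, 1 ≤ n → ε n < d n) (k : ℕ) :
    |nterm d ε k| ≤ (1/2 : ℝ) ^ k := by
  have hDp := Dprod_pos d hd (k+1)
  have hDp' := Dprod_pos d hd k
  have h1 : |nterm d ε k| = (1 + (ε (k+1) : ℝ)) / Dprod d (k+1) := by
    rw [nterm, abs_div, abs_mul, abs_pow, abs_neg, abs_one, one_pow, one_mul,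
      abs_of_pos hDp, abs_of_pos (by positivity : (0:ℝ) < 1 + (ε (k+1) : ℝ))]
  rw [h1]
  have hde : (1 + (ε (k+1) : ℝ)) ≤ d (k+1) := by
    have := hε (k+1) (Nat.le_add_left 1 k)
    have h := hε (k+1) (Nat.le_add_left 1 k)
    have : (ε (k+1) : ℝ) + 1 ≤ d (k+1) := by exact_mod_cast Nat.add_one_le_iff.mpr h
    linarith
  have hstep : Dprod d (k+1) = Dprod d k * d (k+1) := Dprod_succ d k
  have hd1 : (0:ℝ) < d (k+1) := by
    have := hd (k+1) (Nat.le_add_left 1 k); positivity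
  have h2 : (1 + (ε (k+1) : ℝ)) / Dprod d (k+1) ≤ 1 / Dprod d k := by
    rw [hstep, div_le_div_iff₀ (by positivity) hDp']
    nlinarith
  have h3 : (1:ℝ) / Dprod d k ≤ (1/2)^k := by
    rw [div_pow, one_pow, div_le_div_iff₀ hDp' (by positivity)]
    have := two_pow_le_Dprod d hd k
    linarith
  linarith

lemma summable_nterm (d : ℕ → ℕ) (hd : ∀ n, 1 ≤ n → 2 ≤ d n) (ε : ℕ → ℕ)
    (hε : ∀ n, 1 ≤ n → ε n < d n) : Summable (nterm d ε) := by
  apply Summable.of_abs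
  apply Summable.of_nonneg_of_le (fun k => abs_nonneg _) (abs_nterm_le d hd ε hε)
  exact summable_geometric_of_lt_one (by norm_num) (by norm_num)

noncomputable def npart (d : ℕ → ℕ) (ε : ℕ → ℕ) (n : ℕ) : ℝ :=
  ∑ k ∈ Finset.range n, nterm d ε k

lemma tendsto_npart (d : ℕ → ℕ) (hd : ∀ n, 1 ≤ n → 2 ≤ d n) (ε : ℕ → ℕ)
    (hε : ∀ n, 1 ≤ n → ε n < d n) :
    Tendsto (npart d ε) atTop (nhds (negaVal d ε)) :=
  (summable_nterm d hd ε hε).hasSum.tendsto_sum_nat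

lemma nterm_eq (d : ℕ → ℕ) (ε : ℕ → ℕ) (k : ℕ) :
    nterm d ε k = (-1:ℝ)^k * ((1 + (ε (k+1) : ℝ)) / Dprod d (k+1)) := by
  rw [nterm, pow_add]
  ring

lemma mag_bounds (d : ℕ → ℕ) (hd : ∀ n, 1 ≤ n → 2 ≤ d n) (ε : ℕ → ℕ)
    (hε : ∀ n, 1 ≤ n → ε n < d n) (k : ℕ) :
    1 / Dprod d (k+1) ≤ (1 + (ε (k+1) : ℝ)) / Dprod d (k+1) ∧
      (1 + (ε (k+1) : ℝ)) / Dprod d (k+1) ≤ 1 / Dprod d k := by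
  have hDp := Dprod_pos d hd (k+1)
  have hDp' := Dprod_pos d hd k
  constructor
  · gcongr
    have : (0:ℝ) ≤ (ε (k+1):ℝ) := Nat.cast_nonneg _
    linarith
  · have h := hε (k+1) (Nat.le_add_left 1 k)
    have hde : (ε (k+1) : ℝ) + 1 ≤ d (k+1) := by exact_mod_cast Nat.add_one_le_iff.mpr h
    rw [Dprod_succ, div_le_div_iff₀ (by
      have : (0:ℝ) < d (k+1) := by have := hd (k+1) (Nat.le_add_left 1 k); positivity
      positivity) hDp']
    nlinarith

lemma theta_mem (d : ℕ → ℕ) (hd : ∀ n, 1 ≤ n → 2 ≤ d n) (ε : ℕ → ℕ)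
    (hε : ∀ n, 1 ≤ n → ε n < d n) (n : ℕ) :
    0 ≤ (-1:ℝ)^n * (negaVal d ε - npart d ε n) ∧
      (-1:ℝ)^n * (negaVal d ε - npart d ε n) ≤ 1 / Dprod d n := by
  set u : ℕ → ℝ := fun k => (-1:ℝ)^n * (npart d ε (n+k) - npart d ε n) with hu
  have hstep : ∀ k, u (k+1) = u k + (-1:ℝ)^k * ((1 + (ε (n+k+1) : ℝ)) / Dprod d (n+k+1)) := by
    intro k
    have h1 : npart d ε (n+k+1) = npart d ε (n+k) + nterm d ε (n+k) := by
      rw [npart, npart, Finset.sum_range_succ]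
    have hs : (-1:ℝ)^n * (-1:ℝ)^(n+k) = (-1)^k := by
      rw [← pow_add, show n+(n+k) = 2*n+k by ring, pow_add, pow_mul]
      norm_num
    simp only [hu]
    rw [show n + (k+1) = n+k+1 by ring, h1, nterm_eq]
    linear_combination ((1 + (ε (n+k+1) : ℝ)) / Dprod d (n+k+1)) * hs
  have hDn := Dprod_pos d hd n
  have hinv : ∀ k, (Even k → 0 ≤ u k ∧ u k ≤ 1/Dprod d n - 1/Dprod d (n+k)) ∧
      (¬ Even k → 1/Dprod d (n+k) ≤ u k ∧ u k ≤ 1/Dprod d n) := by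
    intro k
    induction k with
    | zero =>
      constructor
      · intro _
        have : u 0 = 0 := by simp [hu, npart]
        simp [this]
      · intro h; exact absurd Even.zero h
    | succ k ih =>
      obtain ⟨ha, hb⟩ := mag_bounds d hd ε hε (n+k)
      have hDk := Dprod_pos d hd (n+k)
      have hDk1 := Dprod_pos d hd (n+k+1)
      rw [show n + (k+1) = n+k+1 from rfl]
      by_cases hk : Even k
      · have hsgn : ((-1:ℝ))^k = 1 := Even.neg_one_pow hk
        have hu1 : u (k+1) = u k + (1 + (ε (n+k+1) : ℝ)) / Dprod d (n+k+1) := by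
          rw [hstep k, hsgn, one_mul]
        obtain ⟨h0, h1⟩ := ih.1 hk
        constructor
        · intro h; exact absurd (Nat.even_add_one.mp h) (by simpa using hk)
        · intro _
          constructor
          · rw [hu1]; linarith
          · rw [hu1]; linarith
      · have hsgn : ((-1:ℝ))^k = -1 := Odd.neg_one_pow (Nat.not_even_iff_odd.mp hk)
        have hu1 : u (k+1) = u k - (1 + (ε (n+k+1) : ℝ)) / Dprod d (n+k+1) := by
          rw [hstep k, hsgn]
          ring
        obtain ⟨h0, h1⟩ := ih.2 hk
        constructor
        · intro _
          constructor
          · rw [hu1]; linarith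
          · rw [hu1]; linarith
        · intro h
          exact absurd (Nat.even_add_one.mpr hk) h
  have hbnd : ∀ k, 0 ≤ u k ∧ u k ≤ 1/Dprod d n := by
    intro k
    have hDk := Dprod_pos d hd (n+k)
    by_cases hk : Even k
    · obtain ⟨h0, h1⟩ := (hinv k).1 hk
      constructor
      · exact h0
      · have : (0:ℝ) < 1/Dprod d (n+k) := by positivity
        linarith
    · obtain ⟨h0, h1⟩ := (hinv k).2 hk
      constructor
      · have : (0:ℝ) < 1/Dprod d (n+k) := by positivity
        linarith
      · exact h1
  have h1 : Tendsto (fun k => npart d ε (n+k)) atTop (nhds (negaVal d ε)) := by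
    rw [show (fun k => npart d ε (n+k)) = (fun k => npart d ε (k+n)) by
      funext k; rw [Nat.add_comm]]
    exact (tendsto_npart d hd ε hε).comp (tendsto_add_atTop_nat n)
  have hlim : Tendsto u atTop (nhds ((-1:ℝ)^n * (negaVal d ε - npart d ε n))) :=
    ((h1.sub tendsto_const_nhds).const_mul _)
  constructor
  · exact ge_of_tendsto' hlim (fun k => (hbnd k).1)
  · exact le_of_tendsto' hlim (fun k => (hbnd k).2)

/-- Helper: if nterm telescopes against A beyond n, the tail equals A n. -/
lemma tail_eq_of_telescope (d : ℕ → ℕ) (hd : ∀ n, 1 ≤ n → 2 ≤ d n) (ε : ℕ → ℕ)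
    (hε : ∀ n, 1 ≤ n → ε n < d n) (n : ℕ) (A : ℕ → ℝ)
    (hA : ∀ m, |A m| ≤ 1/Dprod d m)
    (hstep : ∀ k, nterm d ε (n+k) = A (n+k) - A (n+k+1)) :
    negaVal d ε - npart d ε n = A n := by
  have claim : ∀ k, npart d ε (n+k) - npart d ε n = A n - A (n+k) := by
    intro k
    induction k with
    | zero => simp
    | succ k ih =>
      have h1 : npart d ε (n+k+1) = npart d ε (n+k) + nterm d ε (n+k) := by
        rw [npart, npart, Finset.sum_range_succ]
      rw [show n+(k+1) = n+k+1 from rfl, h1, hstep k]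
      linarith [ih]
  -- A m → 0
  have hA0 : Tendsto A atTop (nhds 0) := by
    have h12 : Tendsto (fun m : ℕ => (1/2:ℝ)^m) atTop (nhds 0) :=
      tendsto_pow_atTop_nhds_zero_of_lt_one (by norm_num) (by norm_num)
    apply squeeze_zero_norm ?_ h12
    intro m
    refine (hA m).trans ?_
    have hDm := Dprod_pos d hd m
    rw [div_pow, one_pow, div_le_div_iff₀ hDm (by positivity)]
    have := two_pow_le_Dprod d hd m
    linarith
  have h1 : Tendsto (fun k => npart d ε (n+k)) atTop (nhds (negaVal d ε)) := by
    rw [show (fun k => npart d ε (n+k)) = (fun k => npart d ε (k+n)) by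
      funext k; rw [Nat.add_comm]]
    exact (tendsto_npart d hd ε hε).comp (tendsto_add_atTop_nat n)
  have h2 : Tendsto (fun k => npart d ε (n+k) - npart d ε n) atTop
      (nhds (negaVal d ε - npart d ε n)) := h1.sub tendsto_const_nhds
  have h3 : Tendsto (fun k => A n - A (n+k)) atTop (nhds (A n)) := by
    have : Tendsto (fun k => A (n+k)) atTop (nhds 0) := by
      rw [show (fun k => A (n+k)) = (fun k => A (k+n)) by funext k; rw [Nat.add_comm]]
      exact hA0.comp (tendsto_add_atTop_nat n)
    simpa using tendsto_const_nhds.sub this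
  exact tendsto_nhds_unique (h2.congr (fun k => claim k)) (by simpa using h3)

lemma tail_max (d : ℕ → ℕ) (hd : ∀ n, 1 ≤ n → 2 ≤ d n) (ε : ℕ → ℕ)
    (hε : ∀ n, 1 ≤ n → ε n < d n) (n : ℕ)
    (h : ∀ k, n < k → (Odd k → ε k = d k - 1) ∧ (Even k → ε k = 0)) :
    negaVal d ε - npart d ε n = if Even n then 1/Dprod d n else 0 := by
  apply tail_eq_of_telescope d hd ε hε n (fun m => if Even m then 1/Dprod d m else 0)
  · intro m
    have hDm := Dprod_pos d hd m
    by_cases hm : Even m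
    · rw [if_pos hm, abs_of_pos (by positivity)]
    · rw [if_neg hm, abs_zero]
      positivity
  · intro k
    set m := n + k with hm
    have hd1 : 2 ≤ d (m+1) := hd (m+1) (Nat.le_add_left 1 m)
    have hDm := Dprod_pos d hd m
    have hDm1 := Dprod_pos d hd (m+1)
    rw [nterm_eq]
    by_cases hme : Even m
    · have hodd : Odd (m+1) := Even.add_one hme
      have hεv : ε (m+1) = d (m+1) - 1 := (h (m+1) (by omega)).1 hodd
      have hsgn : ((-1:ℝ))^m = 1 := Even.neg_one_pow hme
      have hcast : (1 + (ε (m+1) : ℝ)) = d (m+1) := by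
        rw [hεv, Nat.cast_sub (by omega)]
        ring
      rw [hsgn, one_mul, hcast, if_pos hme, if_neg (by simp [Nat.even_add_one, hme])]
      rw [Dprod_succ]
      have hdne : (d (m+1) : ℝ) ≠ 0 := by positivity
      field_simp
      ring
    · have heven : Even (m+1) := Nat.even_add_one.mpr hme
      have hεv : ε (m+1) = 0 := (h (m+1) (by omega)).2 heven
      have hsgn : ((-1:ℝ))^m = -1 := Odd.neg_one_pow (Nat.not_even_iff_odd.mp hme)
      rw [hsgn, hεv, if_neg hme, if_pos heven]
      push_cast
      ring

lemma tail_min (d : ℕ → ℕ) (hd : ∀ n, 1 ≤ n → 2 ≤ d n) (ε : ℕ → ℕ)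
    (hε : ∀ n, 1 ≤ n → ε n < d n) (n : ℕ)
    (h : ∀ k, n < k → (Odd k → ε k = 0) ∧ (Even k → ε k = d k - 1)) :
    negaVal d ε - npart d ε n = if Even n then 0 else -(1/Dprod d n) := by
  apply tail_eq_of_telescope d hd ε hε n (fun m => if Even m then 0 else -(1/Dprod d m))
  · intro m
    have hDm := Dprod_pos d hd m
    by_cases hm : Even m
    · rw [if_pos hm, abs_zero]
      positivity
    · rw [if_neg hm, abs_neg, abs_of_pos (by positivity)]

  · intro k
    set m := n + k with hm
    have hd1 : 2 ≤ d (m+1) := hd (m+1) (Nat.le_add_left 1 m)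
    have hDm := Dprod_pos d hd m
    have hDm1 := Dprod_pos d hd (m+1)
    rw [nterm_eq]
    by_cases hme : Even m
    · have hodd : Odd (m+1) := Even.add_one hme
      have hεv : ε (m+1) = 0 := (h (m+1) (by omega)).1 hodd
      have hsgn : ((-1:ℝ))^m = 1 := Even.neg_one_pow hme
      rw [hsgn, hεv, if_pos hme, if_neg (by simp [Nat.even_add_one, hme])]
      push_cast
      ring
    · have heven : Even (m+1) := Nat.even_add_one.mpr hme
      have hεv : ε (m+1) = d (m+1) - 1 := (h (m+1) (by omega)).2 heven
      have hsgn : ((-1:ℝ))^m = -1 := Odd.neg_one_pow (Nat.not_even_iff_odd.mp hme)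
      have hcast : (1 + (ε (m+1) : ℝ)) = d (m+1) := by
        rw [hεv, Nat.cast_sub (by omega)]
        ring
      rw [hsgn, hcast, if_neg hme, if_pos heven]
      rw [Dprod_succ]
      have hdne : (d (m+1) : ℝ) ≠ 0 := by positivity
      field_simp
      ring

lemma npart_congr (d : ℕ → ℕ) (ε δ : ℕ → ℕ) (m : ℕ)
    (h : ∀ k, 1 ≤ k → k ≤ m → ε k = δ k) : npart d ε m = npart d δ m := by
  unfold npart
  apply Finset.sum_congr rfl
  intro k hk
  rw [Finset.mem_range] at hk
  rw [nterm, nterm, h (k+1) (by omega) (by omega)]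

lemma negaVal_le (d : ℕ → ℕ) (hd : ∀ n, 1 ≤ n → 2 ≤ d n) (ε δ : ℕ → ℕ)
    (hε : ∀ n, 1 ≤ n → ε n < d n) (hδ : ∀ n, 1 ≤ n → δ n < d n) (n : ℕ) (hn : 1 ≤ n)
    (hagree : ∀ k, 1 ≤ k → k < n → ε k = δ k)
    (hlt : (Odd n → ε n < δ n) ∧ (Even n → δ n < ε n)) :
    negaVal d ε ≤ negaVal d δ := by
  obtain ⟨m, rfl⟩ : ∃ m, n = m + 1 := ⟨n - 1, by omega⟩
  have hS : npart d ε m = npart d δ m :=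
    npart_congr d ε δ m (fun k h1 h2 => hagree k h1 (by omega))
  have hDp := Dprod_pos d hd (m+1)
  have hEε : npart d ε (m+1) = npart d ε m
      + (-1:ℝ)^m * ((1 + (ε (m+1) : ℝ)) / Dprod d (m+1)) := by
    rw [npart, Finset.sum_range_succ, ← nterm_eq]; rfl
  have hEδ : npart d δ (m+1) = npart d δ m
      + (-1:ℝ)^m * ((1 + (δ (m+1) : ℝ)) / Dprod d (m+1)) := by
    rw [npart, Finset.sum_range_succ, ← nterm_eq]; rfl
  obtain ⟨hθε1, hθε2⟩ := theta_mem d hd ε hε (m+1)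
  obtain ⟨hθδ1, hθδ2⟩ := theta_mem d hd δ hδ (m+1)
  rw [pow_succ] at hθε1 hθε2 hθδ1 hθδ2
  by_cases hm : Even m
  · have hsgn : ((-1:ℝ))^m = 1 := Even.neg_one_pow hm
    rw [hsgn] at hθε1 hθε2 hθδ1 hθδ2 hEε hEδ
    have hlt' : ε (m+1) < δ (m+1) := hlt.1 (Even.add_one hm)
    have hc : (ε (m+1) : ℝ) + 1 ≤ δ (m+1) := by exact_mod_cast hlt'
    have key : (1 + (ε (m+1):ℝ))/Dprod d (m+1) + 1/Dprod d (m+1)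
        ≤ (1 + (δ (m+1):ℝ))/Dprod d (m+1) := by
      rw [← add_div, div_le_div_iff_of_pos_right hDp]
      linarith
    linarith [hθε2, hθδ1, hS, hEε, hEδ, key]
  · have hsgn : ((-1:ℝ))^m = -1 := Odd.neg_one_pow (Nat.not_even_iff_odd.mp hm)
    rw [hsgn] at hθε1 hθε2 hθδ1 hθδ2 hEε hEδ
    have hlt' : δ (m+1) < ε (m+1) := hlt.2 (Nat.even_add_one.mpr hm)
    have hc : (δ (m+1) : ℝ) + 1 ≤ ε (m+1) := by exact_mod_cast hlt'
    have key : (1 + (δ (m+1):ℝ))/Dprod d (m+1) + 1/Dprod d (m+1)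
        ≤ (1 + (ε (m+1):ℝ))/Dprod d (m+1) := by
      rw [← add_div, div_le_div_iff_of_pos_right hDp]
      linarith
    linarith [hθε2, hθδ1, hS, hEε, hEδ, key, hθε1]

lemma negaVal_eq_boundary (d : ℕ → ℕ) (hd : ∀ n, 1 ≤ n → 2 ≤ d n) (ε δ : ℕ → ℕ)
    (hε : ∀ n, 1 ≤ n → ε n < d n) (hδ : ∀ n, 1 ≤ n → δ n < d n) (n : ℕ) (hn : 1 ≤ n)
    (hagree : ∀ k, 1 ≤ k → k < n → ε k = δ k)
    (hstep : (Odd n → δ n = ε n + 1) ∧ (Even n → ε n = δ n + 1))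
    (htailε : ∀ k, n < k → (Odd k → ε k = d k - 1) ∧ (Even k → ε k = 0))
    (htailδ : ∀ k, n < k → (Odd k → δ k = 0) ∧ (Even k → δ k = d k - 1)) :
    negaVal d ε = negaVal d δ := by
  obtain ⟨m, rfl⟩ : ∃ m, n = m + 1 := ⟨n - 1, by omega⟩
  have hS : npart d ε m = npart d δ m :=
    npart_congr d ε δ m (fun k h1 h2 => hagree k h1 (by omega))
  have hDp := Dprod_pos d hd (m+1)
  have hEε : npart d ε (m+1) = npart d ε m
      + (-1:ℝ)^m * ((1 + (ε (m+1) : ℝ)) / Dprod d (m+1)) := by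
    rw [npart, Finset.sum_range_succ, ← nterm_eq]; rfl
  have hEδ : npart d δ (m+1) = npart d δ m
      + (-1:ℝ)^m * ((1 + (δ (m+1) : ℝ)) / Dprod d (m+1)) := by
    rw [npart, Finset.sum_range_succ, ← nterm_eq]; rfl
  have htε := tail_max d hd ε hε (m+1) htailε
  have htδ := tail_min d hd δ hδ (m+1) htailδ
  by_cases hm : Even m
  · -- m+1 odd
    have hodd : Odd (m+1) := Even.add_one hm
    have hsgn : ((-1:ℝ))^m = 1 := Even.neg_one_pow hm
    have hne : ¬ Even (m+1) := by simp [Nat.even_add_one, hm]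
    rw [if_neg hne] at htε htδ
    have hδn : δ (m+1) = ε (m+1) + 1 := hstep.1 hodd
    have hcast : (1 + (δ (m+1) : ℝ)) = (1 + (ε (m+1) : ℝ)) + 1 := by
      rw [hδn]; push_cast; ring
    rw [hsgn] at hEε hEδ
    have h1 : negaVal d ε = npart d ε (m+1) + 0 := by linarith [htε]
    have h2 : negaVal d δ = npart d δ (m+1) + (-(1/Dprod d (m+1))) := by linarith [htδ]
    rw [h1, h2, hEε, hEδ, hS, hcast]
    field_simp
    ring
  · have heven : Even (m+1) := Nat.even_add_one.mpr hm
    have hsgn : ((-1:ℝ))^m = -1 := Odd.neg_one_pow (Nat.not_even_iff_odd.mp hm)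
    rw [if_pos heven] at htε htδ
    have hεn : ε (m+1) = δ (m+1) + 1 := hstep.2 heven
    have hcast : (1 + (ε (m+1) : ℝ)) = (1 + (δ (m+1) : ℝ)) + 1 := by
      rw [hεn]; push_cast; ring
    rw [hsgn] at hEε hEδ
    have h1 : negaVal d ε = npart d ε (m+1) + 1/Dprod d (m+1) := by linarith [htε]
    have h2 : negaVal d δ = npart d δ (m+1) + 0 := by linarith [htδ]
    rw [h1, h2, hEε, hEδ, hS, hcast]
    field_simp
    ring

/-- greedy nega-expansion: digit and remainder -/
noncomputable def gr (d : ℕ → ℕ) (x : ℝ) : ℕ → ℕ × ℝ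
  | 0 => (0, x)
  | n+1 =>
    let r := (gr d x n).2
    let e := min ⌊r * Dprod d (n+1)⌋₊ (d (n+1) - 1)
    (e, (1 + (e : ℝ)) / Dprod d (n+1) - r)

lemma gr_rem (d : ℕ → ℕ) (hd : ∀ n, 1 ≤ n → 2 ≤ d n) (x : ℝ)
    (hx0 : 0 ≤ x) (hx1 : x ≤ 1) (n : ℕ) :
    0 ≤ (gr d x n).2 ∧ (gr d x n).2 ≤ 1 / Dprod d n := by
  induction n with
  | zero => simpa [gr, Dprod] using ⟨hx0, hx1⟩
  | succ n ih =>
    obtain ⟨h0, h1⟩ := ih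
    set r := (gr d x n).2 with hr
    have hD := Dprod_pos d hd n
    have hD1 := Dprod_pos d hd (n+1)
    have hdn : 2 ≤ d (n+1) := hd (n+1) (Nat.le_add_left 1 n)
    have hDs : Dprod d (n+1) = Dprod d n * d (n+1) := Dprod_succ d n
    have hrD : r * Dprod d (n+1) ≤ d (n+1) := by
      rw [hDs]
      have : r * (Dprod d n * d (n+1)) ≤ (1/Dprod d n) * (Dprod d n * d (n+1)) := by
        apply mul_le_mul_of_nonneg_right h1
        positivity
      calc r * (Dprod d n * d (n+1)) ≤ (1/Dprod d n) * (Dprod d n * d (n+1)) := this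
        _ = d (n+1) := by field_simp
    have hrD0 : 0 ≤ r * Dprod d (n+1) := by positivity
    set e := min ⌊r * Dprod d (n+1)⌋₊ (d (n+1) - 1) with he
    have hgr : (gr d x (n+1)).2 = (1 + (e : ℝ)) / Dprod d (n+1) - r := rfl
    have hkey1 : r * Dprod d (n+1) ≤ 1 + (e : ℝ) := by
      rcases le_or_gt ⌊r * Dprod d (n+1)⌋₊ (d (n+1) - 1) with h | h
      · have : e = ⌊r * Dprod d (n+1)⌋₊ := by rw [he, min_eq_left h]
        rw [this]
        have := Nat.lt_floor_add_one (r * Dprod d (n+1))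
        linarith
      · have heq : e = d (n+1) - 1 := by rw [he, min_eq_right h.le]
        have : (1 : ℝ) + e = d (n+1) := by
          rw [heq, Nat.cast_sub (by omega)]; ring
        rw [this]; exact hrD
    have hkey2 : (e : ℝ) ≤ r * Dprod d (n+1) := by
      rcases le_or_gt ⌊r * Dprod d (n+1)⌋₊ (d (n+1) - 1) with h | h
      · have : e = ⌊r * Dprod d (n+1)⌋₊ := by rw [he, min_eq_left h]
        rw [this]
        exact Nat.floor_le hrD0
      · have heq : e = d (n+1) - 1 := by rw [he, min_eq_right h.le]
        have hfl : (d (n+1) : ℝ) ≤ r * Dprod d (n+1) := by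
          exact (Nat.le_floor_iff hrD0).mp (by omega)
        have : (e:ℝ) ≤ d (n+1) := by rw [heq]; exact_mod_cast Nat.sub_le _ _
        linarith
    constructor
    · rw [hgr, sub_nonneg, le_div_iff₀ hD1]
      linarith
    · rw [hgr, sub_le_iff_le_add, div_le_iff₀ hD1]
      have hexp : (1/Dprod d (n+1) + r) * Dprod d (n+1) = 1 + r * Dprod d (n+1) := by
        field_simp
      linarith

lemma gr_digit_lt (d : ℕ → ℕ) (hd : ∀ n, 1 ≤ n → 2 ≤ d n) (x : ℝ) :
    ∀ n, 1 ≤ n → (gr d x n).1 < d n := by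
  intro n hn
  obtain ⟨m, rfl⟩ : ∃ m, n = m + 1 := ⟨n - 1, by omega⟩
  have h1 : (gr d x (m+1)).1 = min ⌊(gr d x m).2 * Dprod d (m+1)⌋₊ (d (m+1) - 1) := rfl
  have := hd (m+1) (Nat.le_add_left 1 m)
  have h2 := min_le_right ⌊(gr d x m).2 * Dprod d (m+1)⌋₊ (d (m+1) - 1)
  omega

lemma npart_gr (d : ℕ → ℕ) (x : ℝ) (n : ℕ) :
    npart d (fun k => (gr d x k).1) n = x - (-1:ℝ)^n * (gr d x n).2 := by
  induction n with
  | zero => simp [npart, gr]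
  | succ n ih =>
    have h1 : npart d (fun k => (gr d x k).1) (n+1)
        = npart d (fun k => (gr d x k).1) n + nterm d (fun k => (gr d x k).1) n := by
      rw [npart, Finset.sum_range_succ]; rfl
    have h2 : (gr d x (n+1)).2
        = (1 + ((gr d x (n+1)).1 : ℝ)) / Dprod d (n+1) - (gr d x n).2 := rfl
    rw [h1, ih, nterm_eq, pow_succ, h2]
    ring

lemma exists_repr (d : ℕ → ℕ) (hd : ∀ n, 1 ≤ n → 2 ≤ d n) (x : ℝ)
    (hx0 : 0 ≤ x) (hx1 : x ≤ 1) :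
    ∃ ε : ℕ → ℕ, (∀ n, 1 ≤ n → ε n < d n) ∧ x = negaVal d ε := by
  set ε := fun k => (gr d x k).1 with hε
  have hval : ∀ n, 1 ≤ n → ε n < d n := gr_digit_lt d hd x
  refine ⟨ε, hval, ?_⟩
  have h1 : Tendsto (npart d ε) atTop (nhds (negaVal d ε)) :=
    (summable_nterm d hd ε hval).hasSum.tendsto_sum_nat
  have h2 : Tendsto (npart d ε) atTop (nhds x) := by
    have hb : ∀ n, ‖npart d ε n - x‖ ≤ (1/2:ℝ)^n := by
      intro n
      obtain ⟨hr0, hr1⟩ := gr_rem d hd x hx0 hx1 n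
      have hD := Dprod_pos d hd n
      have h3 : npart d ε n - x = -((-1:ℝ)^n * (gr d x n).2) := by
        rw [npart_gr d x n]; ring
      rw [h3, norm_neg, norm_mul, norm_pow, norm_neg, norm_one, one_pow, one_mul,
        Real.norm_eq_abs, abs_of_nonneg hr0]
      refine hr1.trans ?_
      rw [div_pow, one_pow, div_le_div_iff₀ hD (by positivity)]
      have := two_pow_le_Dprod d hd n
      linarith
    have h12 : Tendsto (fun m : ℕ => (1/2:ℝ)^m) atTop (nhds 0) :=
      tendsto_pow_atTop_nhds_zero_of_lt_one (by norm_num) (by norm_num)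
    have := squeeze_zero_norm hb h12
    have h4 : Tendsto (fun n => (npart d ε n - x) + x) atTop (nhds (0 + x)) :=
      this.add tendsto_const_nhds
    simpa using h4
  exact tendsto_nhds_unique h2 h1

section G
variable (d : ℕ → ℕ) (p : ℕ → ℕ → ℝ)
variable (hd : ∀ n, 1 ≤ n → 2 ≤ d n)
variable (hp : ∀ n, 1 ≤ n → ∀ i, i < d n → 0 < p i n ∧ p i n < 1)
variable (hsum : ∀ n, 1 ≤ n → ∑ i ∈ Finset.range (d n), p i n = 1)

noncomputable def PP (e : ℕ → ℕ) (m : ℕ) : ℝ := ∏ j ∈ Finset.Icc 1 m, p (e j) j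

noncomputable def gterm (e : ℕ → ℕ) (k : ℕ) : ℝ := beta p (e (k+1)) (k+1) * PP p e k

noncomputable def Gval (e : ℕ → ℕ) : ℝ := ∑' k, gterm p e k

noncomputable def Gtail (e : ℕ → ℕ) (m : ℕ) : ℝ := ∑' k, gterm p e (k + m)

lemma PP_zero (e : ℕ → ℕ) : PP p e 0 = 1 := by simp [PP]

lemma PP_succ (e : ℕ → ℕ) (m : ℕ) : PP p e (m+1) = PP p e m * p (e (m+1)) (m+1) := by
  unfold PP
  rw [Finset.prod_Icc_succ_top (Nat.le_add_left 1 m)]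

include hp in
lemma PP_pos (e : ℕ → ℕ) (he : ∀ n, 1 ≤ n → e n < d n) (m : ℕ) : 0 < PP p e m := by
  induction m with
  | zero => simp [PP_zero]
  | succ m ih =>
    rw [PP_succ]
    exact mul_pos ih (hp (m+1) (Nat.le_add_left 1 m) _ (he (m+1) (Nat.le_add_left 1 m))).1

include hp in
lemma PP_le_one (e : ℕ → ℕ) (he : ∀ n, 1 ≤ n → e n < d n) (m : ℕ) : PP p e m ≤ 1 := by
  induction m with
  | zero => simp [PP_zero]
  | succ m ih =>
    rw [PP_succ]
    have h1 := (hp (m+1) (Nat.le_add_left 1 m) _ (he (m+1) (Nat.le_add_left 1 m)))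
    have h2 := PP_pos d p hp e he m
    nlinarith

include hp in
lemma beta_nonneg (n i : ℕ) (hn : 1 ≤ n) (hi : i ≤ d n) : 0 ≤ beta p i n := by
  apply Finset.sum_nonneg
  intro t ht
  rw [Finset.mem_range] at ht
  exact (hp n hn t (by omega)).1.le

lemma beta_succ (n i : ℕ) : beta p (i+1) n = beta p i n + p i n := Finset.sum_range_succ _ _

include hp hsum in
lemma beta_add_le (n i : ℕ) (hn : 1 ≤ n) (hi : i < d n) : beta p i n + p i n ≤ 1 := by
  rw [← beta_succ, ← hsum n hn]
  unfold beta
  apply Finset.sum_le_sum_of_subset_of_nonneg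
  · exact Finset.range_subset_range.mpr (by omega)
  · intro t ht _
    rw [Finset.mem_range] at ht
    exact (hp n hn t (by omega)).1.le

include hp in
lemma beta_mono (n i j : ℕ) (hn : 1 ≤ n) (hij : i ≤ j) (hj : j ≤ d n) :
    beta p i n ≤ beta p j n := by
  unfold beta
  apply Finset.sum_le_sum_of_subset_of_nonneg (Finset.range_subset_range.mpr hij)
  intro t ht _
  rw [Finset.mem_range] at ht
  exact (hp n hn t (by omega)).1.le

include hp in
lemma beta_pos (n i : ℕ) (hn : 1 ≤ n) (hi0 : 1 ≤ i) (hi : i ≤ d n) : 0 < beta p i n := by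
  have h1 : p 0 n ≤ beta p i n := by
    apply Finset.single_le_sum (f := fun t => p t n)
    · intro t ht
      rw [Finset.mem_range] at ht
      exact (hp n hn t (by omega)).1.le
    · rw [Finset.mem_range]; omega
  have := (hp n hn 0 (by omega)).1
  linarith

include hp hsum in
lemma beta_top (n i : ℕ) (hn : 1 ≤ n) (hi : i < d n)
    (h : beta p i n + p i n = 1) : i = d n - 1 := by
  by_contra hne
  have h2 : i + 1 < d n := by omega
  have h3 := beta_add_le d p hp hsum n (i+1) hn h2
  rw [beta_succ] at h3
  have := (hp n hn (i+1) h2).1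
  linarith

include hp hsum in
lemma gterm_nonneg (e : ℕ → ℕ) (he : ∀ n, 1 ≤ n → e n < d n) (k : ℕ) :
    0 ≤ gterm p e k :=
  mul_nonneg (beta_nonneg d p hp (k+1) _ (Nat.le_add_left 1 k) (he (k+1) (Nat.le_add_left 1 k)).le)
    (PP_pos d p hp e he k).le

include hp hsum in
lemma gterm_le (e : ℕ → ℕ) (he : ∀ n, 1 ≤ n → e n < d n) (k : ℕ) :
    gterm p e k ≤ PP p e k - PP p e (k+1) := by
  have h1 := beta_add_le d p hp hsum (k+1) (e (k+1)) (Nat.le_add_left 1 k)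
    (he (k+1) (Nat.le_add_left 1 k))
  have h2 := PP_pos d p hp e he k
  rw [gterm, PP_succ]
  nlinarith

include hp hsum in
lemma summable_gterm (e : ℕ → ℕ) (he : ∀ n, 1 ≤ n → e n < d n) :
    Summable (gterm p e) := by
  apply summable_of_sum_range_le (c := 1) (fun k => gterm_nonneg d p hp hsum e he k)
  intro m
  calc ∑ k ∈ Finset.range m, gterm p e k
      ≤ ∑ k ∈ Finset.range m, (PP p e k - PP p e (k+1)) :=
        Finset.sum_le_sum (fun k _ => gterm_le d p hp hsum e he k)
    _ = PP p e 0 - PP p e m := Finset.sum_range_sub' (PP p e) m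
    _ ≤ 1 := by
        have := PP_pos d p hp e he m
        rw [PP_zero]
        linarith

include hp hsum in
lemma hasSum_PPtel (e : ℕ → ℕ) (he : ∀ n, 1 ≤ n → e n < d n)
    (hPP0 : Tendsto (PP p e) atTop (nhds 0)) (m : ℕ) :
    HasSum (fun k => PP p e (k+m) - PP p e (k+m+1)) (PP p e m) := by
  have hsummable : Summable (fun k => PP p e (k+m) - PP p e (k+m+1)) := by
    apply summable_of_sum_range_le (c := PP p e m)
    · intro k
      have h1 := (hp (k+m+1) (by omega) _ (he (k+m+1) (by omega)))
      have h2 := PP_pos d p hp e he (k+m)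
      rw [PP_succ]
      nlinarith
    · intro K
      simp only [show ∀ i : ℕ, i + m + 1 = i + 1 + m from fun i => by omega]
      rw [Finset.sum_range_sub' (fun k => PP p e (k+m)) K]
      have h2 := PP_pos d p hp e he (K+m)
      simp only [Nat.zero_add]
      linarith
  have hpart : Tendsto (fun K => ∑ k ∈ Finset.range K, (PP p e (k+m) - PP p e (k+m+1)))
      atTop (nhds (PP p e m)) := by
    have heq : ∀ K, ∑ k ∈ Finset.range K, (PP p e (k+m) - PP p e (k+m+1))
        = PP p e m - PP p e (K+m) := by
      intro K
      simp only [show ∀ i : ℕ, i + m + 1 = i + 1 + m from fun i => by omega]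
      rw [Finset.sum_range_sub' (fun k => PP p e (k+m)) K]
      simp
    rw [show (fun K => ∑ k ∈ Finset.range K, (PP p e (k+m) - PP p e (k+m+1)))
      = fun K => PP p e m - PP p e (K+m) from funext heq]
    have : Tendsto (fun K => PP p e (K+m)) atTop (nhds 0) :=
      hPP0.comp (tendsto_add_atTop_nat m)
    simpa using tendsto_const_nhds.sub this
  have h5 := tendsto_nhds_unique hsummable.hasSum.tendsto_sum_nat hpart
  exact h5 ▸ hsummable.hasSum

include hp hsum in
lemma hasSum_gtail (e : ℕ → ℕ) (he : ∀ n, 1 ≤ n → e n < d n) (m : ℕ) :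
    HasSum (fun k => gterm p e (k+m)) (Gtail p e m) := by
  have h := (summable_nat_add_iff m).mpr (summable_gterm d p hp hsum e he)
  exact h.hasSum

include hp hsum in
lemma Gtail_nonneg (e : ℕ → ℕ) (he : ∀ n, 1 ≤ n → e n < d n) (m : ℕ) :
    0 ≤ Gtail p e m :=
  tsum_nonneg (fun k => gterm_nonneg d p hp hsum e he (k+m))

include hp hsum in
lemma hasSum_slack (e : ℕ → ℕ) (he : ∀ n, 1 ≤ n → e n < d n)
    (hPP0 : Tendsto (PP p e) atTop (nhds 0)) (m : ℕ) :
    HasSum (fun k => (PP p e (k+m) - PP p e (k+m+1)) - gterm p e (k+m))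
      (PP p e m - Gtail p e m) :=
  (hasSum_PPtel d p hp hsum e he hPP0 m).sub (hasSum_gtail d p hp hsum e he m)

include hp hsum in
lemma slack_nonneg (e : ℕ → ℕ) (he : ∀ n, 1 ≤ n → e n < d n) (k m : ℕ) :
    0 ≤ (PP p e (k+m) - PP p e (k+m+1)) - gterm p e (k+m) := by
  have := gterm_le d p hp hsum e he (k+m)
  linarith

include hp hsum in
lemma Gtail_le (e : ℕ → ℕ) (he : ∀ n, 1 ≤ n → e n < d n)
    (hPP0 : Tendsto (PP p e) atTop (nhds 0)) (m : ℕ) :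
    Gtail p e m ≤ PP p e m := by
  have h := hasSum_slack d p hp hsum e he hPP0 m
  have := h.nonneg (fun k => slack_nonneg d p hp hsum e he k m)
  linarith

include hp hsum in
lemma Gtail_eq_PP (e : ℕ → ℕ) (he : ∀ n, 1 ≤ n → e n < d n)
    (hPP0 : Tendsto (PP p e) atTop (nhds 0)) (m : ℕ)
    (h : Gtail p e m = PP p e m) : ∀ k, m < k → e k = d k - 1 := by
  intro k hk
  obtain ⟨j, rfl⟩ : ∃ j, k = j + m + 1 := ⟨k - m - 1, by omega⟩
  have hs := hasSum_slack d p hp hsum e he hPP0 m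
  rw [h, sub_self] at hs
  have hterm : (PP p e (j+m) - PP p e (j+m+1)) - gterm p e (j+m) = 0 := by
    have hle := le_hasSum hs j (fun i _ => slack_nonneg d p hp hsum e he i m)
    have := slack_nonneg d p hp hsum e he j m
    linarith
  rw [gterm, PP_succ] at hterm
  have hPPpos := PP_pos d p hp e he (j+m)
  have hfac : 1 - p (e (j+m+1)) (j+m+1) - beta p (e (j+m+1)) (j+m+1) = 0 := by
    have h2 : PP p e (j+m) * (1 - p (e (j+m+1)) (j+m+1) - beta p (e (j+m+1)) (j+m+1)) = 0 := by
      linarith [hterm]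
    rcases mul_eq_zero.mp h2 with h3 | h3
    · exact absurd h3 hPPpos.ne'
    · exact h3
  exact beta_top d p hp hsum (j+m+1) _ (by omega) (he (j+m+1) (by omega)) (by linarith)

include hp hsum in
lemma Gtail_eq_zero (e : ℕ → ℕ) (he : ∀ n, 1 ≤ n → e n < d n) (m : ℕ)
    (h : Gtail p e m = 0) : ∀ k, m < k → e k = 0 := by
  intro k hk
  obtain ⟨j, rfl⟩ : ∃ j, k = j + m + 1 := ⟨k - m - 1, by omega⟩
  have hs := hasSum_gtail d p hp hsum e he m
  rw [h] at hs
  have hterm : gterm p e (j+m) = 0 := by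
    have hle := le_hasSum hs j (fun i _ => gterm_nonneg d p hp hsum e he (i+m))
    have := gterm_nonneg d p hp hsum e he (j+m)
    linarith
  rw [gterm] at hterm
  have hPPpos := PP_pos d p hp e he (j+m)
  have hbz : beta p (e (j+m+1)) (j+m+1) = 0 := by
    rcases mul_eq_zero.mp hterm with h3 | h3
    · exact h3
    · exact absurd h3 hPPpos.ne'
  by_contra hne
  have := beta_pos d p hp (j+m+1) (e (j+m+1)) (by omega) (by omega)
    (he (j+m+1) (by omega)).le
  linarith


include hp hsum in
lemma Gval_split (e : ℕ → ℕ) (he : ∀ n, 1 ≤ n → e n < d n) (m : ℕ) :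
    Gval p e = ∑ k ∈ Finset.range m, gterm p e k + Gtail p e m :=
  (Summable.sum_add_tsum_nat_add m (summable_gterm d p hp hsum e he)).symm

include hp hsum in
lemma Gtail_peel (e : ℕ → ℕ) (he : ∀ n, 1 ≤ n → e n < d n) (m : ℕ) :
    Gtail p e m = gterm p e m + Gtail p e (m+1) := by
  have hsm := (summable_nat_add_iff m).mpr (summable_gterm d p hp hsum e he)
  rw [Gtail, Summable.tsum_eq_zero_add hsm]
  congr 1
  · simp
  · rw [Gtail]
    apply tsum_congr
    intro k
    congr 1
    omega

include hp hsum in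
lemma Gval_lt (e f : ℕ → ℕ) (he : ∀ n, 1 ≤ n → e n < d n) (hf : ∀ n, 1 ≤ n → f n < d n)
    (hPPe : Tendsto (PP p e) atTop (nhds 0))
    (n : ℕ) (hn : 1 ≤ n)
    (hagree : ∀ k, 1 ≤ k → k < n → e k = f k) (hlt : e n < f n)
    (hnb : ¬ (f n = e n + 1 ∧ (∀ k, n < k → e k = d k - 1) ∧ (∀ k, n < k → f k = 0))) :
    Gval p e < Gval p f := by
  obtain ⟨m, rfl⟩ : ∃ m, n = m + 1 := ⟨n - 1, by omega⟩
  -- agreement of PP up to m+... : PP p e k = PP p f k for k ≤ m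
  have hPPagree : ∀ k, k ≤ m → PP p e k = PP p f k := by
    intro k hk
    unfold PP
    apply Finset.prod_congr rfl
    intro j hj
    rw [Finset.mem_Icc] at hj
    rw [hagree j hj.1 (by omega)]
  have hgagree : ∀ k, k < m → gterm p e k = gterm p f k := by
    intro k hk
    rw [gterm, gterm, hagree (k+1) (by omega) (by omega), hPPagree k (by omega)]
  have hsplit_e := Gval_split d p hp hsum e he m
  have hsplit_f := Gval_split d p hp hsum f hf m
  have hsum_eq : ∑ k ∈ Finset.range m, gterm p e k = ∑ k ∈ Finset.range m, gterm p f k :=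
    Finset.sum_congr rfl (fun k hk => hgagree k (Finset.mem_range.mp hk))
  have hpeel_e := Gtail_peel d p hp hsum e he m
  have hpeel_f := Gtail_peel d p hp hsum f hf m
  -- abbreviations
  set Q := PP p e m with hQ
  have hQf : PP p f m = Q := (hPPagree m le_rfl).symm
  have hQpos : 0 < Q := PP_pos d p hp e he m
  have hpe := hp (m+1) (Nat.le_add_left 1 m) _ (he (m+1) (Nat.le_add_left 1 m))
  have hbf : beta p (e (m+1) + 1) (m+1) ≤ beta p (f (m+1)) (m+1) :=
    beta_mono d p hp (m+1) _ _ (Nat.le_add_left 1 m) hlt (hf (m+1) (Nat.le_add_left 1 m)).le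
  rw [beta_succ] at hbf
  -- three nonneg pieces
  have ht1 : 0 ≤ Q * (beta p (f (m+1)) (m+1) - beta p (e (m+1)) (m+1) - p (e (m+1)) (m+1)) := by
    apply mul_nonneg hQpos.le
    linarith
  have hPPe1 : PP p e (m+1) = Q * p (e (m+1)) (m+1) := by rw [PP_succ]
  have ht2 : 0 ≤ PP p e (m+1) - Gtail p e (m+1) := by
    have := Gtail_le d p hp hsum e he hPPe (m+1)
    linarith
  have ht3 : 0 ≤ Gtail p f (m+1) := Gtail_nonneg d p hp hsum f hf (m+1)
  have hdecomp : Gval p f - Gval p e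
      = Q * (beta p (f (m+1)) (m+1) - beta p (e (m+1)) (m+1) - p (e (m+1)) (m+1))
        + (PP p e (m+1) - Gtail p e (m+1)) + Gtail p f (m+1) := by
    rw [hsplit_e, hsplit_f, hsum_eq, hpeel_e, hpeel_f, gterm, gterm, hQf, ← hQ, hPPe1]
    ring
  rcases lt_or_ge (Gval p e) (Gval p f) with h | h
  · exact h
  exfalso
  have hzero : Gval p f - Gval p e = 0 := le_antisymm (by linarith) (by linarith [ht1, ht2, ht3, hdecomp])
  have h1 : Q * (beta p (f (m+1)) (m+1) - beta p (e (m+1)) (m+1) - p (e (m+1)) (m+1)) = 0 := by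
    linarith [hdecomp, hzero, ht2, ht3]
  have h2 : PP p e (m+1) - Gtail p e (m+1) = 0 := by linarith [hdecomp, hzero, ht1, ht3]
  have h3 : Gtail p f (m+1) = 0 := by linarith [hdecomp, hzero, ht1, ht2]
  apply hnb
  refine ⟨?_, ?_, ?_⟩
  · -- f (m+1) = e (m+1) + 1
    have hbeq : beta p (f (m+1)) (m+1) = beta p (e (m+1)) (m+1) + p (e (m+1)) (m+1) := by
      rcases mul_eq_zero.mp h1 with hc | hc
      · exact absurd hc hQpos.ne'
      · linarith
    by_contra hne
    have hlt2 : e (m+1) + 2 ≤ f (m+1) := by omega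
    have hfd := hf (m+1) (Nat.le_add_left 1 m)
    have hb2 : beta p (e (m+1) + 2) (m+1) ≤ beta p (f (m+1)) (m+1) :=
      beta_mono d p hp (m+1) _ _ (Nat.le_add_left 1 m) hlt2 hfd.le
    rw [show e (m+1) + 2 = (e (m+1) + 1) + 1 from rfl, beta_succ, beta_succ] at hb2
    have hp1 := (hp (m+1) (Nat.le_add_left 1 m) (e (m+1) + 1) (by omega)).1
    linarith
  · exact Gtail_eq_PP d p hp hsum e he hPPe (m+1) (by linarith)
  · exact Gtail_eq_zero d p hp hsum f hf (m+1) h3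

end G

/-- tilde transform of a digit sequence -/
def etil (d : ℕ → ℕ) (ε : ℕ → ℕ) (n : ℕ) : ℕ := if Odd n then ε n else d n - 1 - ε n

lemma etil_valid (d : ℕ → ℕ) (hd : ∀ n, 1 ≤ n → 2 ≤ d n) (ε : ℕ → ℕ)
    (hε : ∀ n, 1 ≤ n → ε n < d n) : ∀ n, 1 ≤ n → etil d ε n < d n := by
  intro n hn
  have h1 := hε n hn
  have h2 := hd n hn
  unfold etil
  split <;> omega

lemma Ftil_eq_Gval (d : ℕ → ℕ) (hd : ∀ n, 1 ≤ n → 2 ≤ d n) (p : ℕ → ℕ → ℝ)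
    (hp : ∀ n, 1 ≤ n → ∀ i, i < d n → 0 < p i n ∧ p i n < 1)
    (hsum : ∀ n, 1 ≤ n → ∑ i ∈ Finset.range (d n), p i n = 1)
    (ε : ℕ → ℕ) (hε : ∀ n, 1 ≤ n → ε n < d n) :
    Ftil d p ε = Gval p (etil d ε) := by
  have hbt : ∀ m, betatil d p (ε m) m = beta p (etil d ε m) m := by
    intro m
    unfold betatil etil
    split <;> rfl
  have hpt : ∀ j, ptil d p (ε j) j = p (etil d ε j) j := by
    intro j
    unfold ptil etil
    split <;> rfl
  have hterm : ∀ n : ℕ, betatil d p (ε (n + 2)) (n + 2)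
      * ∏ j ∈ Finset.Icc 1 (n + 1), ptil d p (ε j) j = gterm p (etil d ε) (n+1) := by
    intro n
    rw [gterm, hbt (n+2)]
    congr 1
    exact Finset.prod_congr rfl (fun j _ => hpt j)
  have hhead : beta p (ε 1) 1 = gterm p (etil d ε) 0 := by
    rw [gterm, PP_zero, mul_one]
    have h1 : etil d ε 1 = ε 1 := by simp [etil]
    rw [h1]
  rw [Ftil, Gval, Summable.tsum_eq_zero_add (summable_gterm d p hp hsum (etil d ε)
    (etil_valid d hd ε hε)), hhead]
  congr 1
  apply tsum_congr
  intro n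
  rw [hterm n]


/-- With all p_{i,n} > 0, column sums 1 and vanishing products, any function
F on [0,1] that agrees with F̃ on nega-(d_n) representations is strictly increasing on [0,1]. -/
theorem Ftil_strictMonoOn (d : ℕ → ℕ) (hd : ∀ n, 1 ≤ n → 2 ≤ d n)
    (p : ℕ → ℕ → ℝ)
    (hp : ∀ n, 1 ≤ n → ∀ i, i < d n → 0 < p i n ∧ p i n < 1)
    (hsum : ∀ n, 1 ≤ n → ∑ i ∈ Finset.range (d n), p i n = 1)
    (hprod : ∀ ι : ℕ → ℕ, (∀ n, 1 ≤ n → ι n < d n) →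
      Filter.Tendsto (fun n => ∏ j ∈ Finset.Icc 1 n, p (ι j) j) Filter.atTop (nhds 0))
    (F : ℝ → ℝ)
    (hF : ∀ x ∈ Set.Icc (0 : ℝ) 1, ∀ ε : ℕ → ℕ, IsNegaRepr d ε x → F x = Ftil d p ε) :
    StrictMonoOn F (Set.Icc (0 : ℝ) 1) := by
  intro x hx y hy hxy
  obtain ⟨hx0, hx1⟩ := hx
  obtain ⟨hy0, hy1⟩ := hy
  obtain ⟨ε, hεv, hεx⟩ := exists_repr d hd x hx0 hx1
  obtain ⟨δ, hδv, hδy⟩ := exists_repr d hd y hy0 hy1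
  have hFx : F x = Ftil d p ε := hF x ⟨hx0, hx1⟩ ε ⟨hεv, hεx⟩
  have hFy : F y = Ftil d p δ := hF y ⟨hy0, hy1⟩ δ ⟨hδv, hδy⟩
  set e := etil d ε with hedef
  set f := etil d δ with hfdef
  have he : ∀ n, 1 ≤ n → e n < d n := etil_valid d hd ε hεv
  have hf : ∀ n, 1 ≤ n → f n < d n := etil_valid d hd δ hδv
  rw [hFx, hFy, Ftil_eq_Gval d hd p hp hsum ε hεv, Ftil_eq_Gval d hd p hp hsum δ hδv,
    ← hedef, ← hfdef]
  have hPPe : Filter.Tendsto (PP p e) atTop (nhds 0) := hprod e he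
  -- translate e-facts to ε-facts
  have hee : ∀ k, 1 ≤ k → (Odd k → e k = ε k) ∧ (¬ Odd k → e k = d k - 1 - ε k) := by
    intro k hk
    constructor
    · intro h; rw [hedef]; unfold etil; rw [if_pos h]
    · intro h; rw [hedef]; unfold etil; rw [if_neg h]
  have hff : ∀ k, 1 ≤ k → (Odd k → f k = δ k) ∧ (¬ Odd k → f k = d k - 1 - δ k) := by
    intro k hk
    constructor
    · intro h; rw [hfdef]; unfold etil; rw [if_pos h]
    · intro h; rw [hfdef]; unfold etil; rw [if_neg h]
  by_cases hsame : ∀ k, 1 ≤ k → e k = f k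
  · exfalso
    have hxyeq : x = y := by
      rw [hεx, hδy, negaVal_eq_tsum, negaVal_eq_tsum]
      apply tsum_congr
      intro k
      have h1 : ε (k+1) = δ (k+1) := by
        have hk1 : (1:ℕ) ≤ k+1 := by omega
        have h2 := hsame (k+1) hk1
        have h3 := hee (k+1) hk1
        have h4 := hff (k+1) hk1
        have h5 := hεv (k+1) hk1
        have h6 := hδv (k+1) hk1
        have h7 := hd (k+1) hk1
        rcases Nat.even_or_odd (k+1) with hpar | hpar
        · have := h3.2 (by simp [Nat.not_odd_iff_even, hpar])
          have := h4.2 (by simp [Nat.not_odd_iff_even, hpar])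
          omega
        · have := h3.1 hpar
          have := h4.1 hpar
          omega
      rw [nterm, nterm, h1]
    exact absurd hxyeq (ne_of_lt hxy)
  · push_neg at hsame
    obtain ⟨k₀, hk₀1, hk₀2⟩ := hsame
    have hex : ∃ k, 1 ≤ k ∧ e k ≠ f k := ⟨k₀, hk₀1, hk₀2⟩
    set n := Nat.find hex with hndef
    obtain ⟨hn1, hnne⟩ := Nat.find_spec hex
    have hagree : ∀ k, 1 ≤ k → k < n → e k = f k := by
      intro k h1 h2
      by_contra hc
      exact (Nat.find_min hex h2) ⟨h1, hc⟩
    have hεδagree : ∀ k, 1 ≤ k → k < n → ε k = δ k := by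
      intro k h1 h2
      have h3 := hee k h1
      have h4 := hff k h1
      have h5 := hεv k h1
      have h6 := hδv k h1
      have h7 := hd k h1
      have h8 := hagree k h1 h2
      rcases Nat.even_or_odd k with hpar | hpar
      · have := h3.2 (by simp [Nat.not_odd_iff_even, hpar])
        have := h4.2 (by simp [Nat.not_odd_iff_even, hpar])
        omega
      · have := h3.1 hpar
        have := h4.1 hpar
        omega
    have hεn := hεv n hn1
    have hδn := hδv n hn1
    have hdn := hd n hn1
    have heen := hee n hn1
    have hffn := hff n hn1
    rcases Nat.lt_trichotomy (e n) (f n) with hlt | heq | hgt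
    · -- main case : show Gval p e < Gval p f
      by_cases hb : f n = e n + 1 ∧ (∀ k, n < k → e k = d k - 1) ∧ (∀ k, n < k → f k = 0)
      · exfalso
        obtain ⟨hb1, hb2, hb3⟩ := hb
        have hxyeq : x = y := by
          rw [hεx, hδy]
          apply negaVal_eq_boundary d hd ε δ hεv hδv n hn1 hεδagree
          · constructor
            · intro hodd
              have := heen.1 hodd
              have := hffn.1 hodd
              omega
            · intro heven
              have := heen.2 (by simp [Nat.not_odd_iff_even, heven])
              have := hffn.2 (by simp [Nat.not_odd_iff_even, heven])
              omega
          · intro k hk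
            have h3 := hee k (by omega)
            have h5 := hεv k (by omega)
            have h7 := hd k (by omega)
            have h9 := hb2 k hk
            constructor
            · intro hodd
              have := h3.1 hodd
              omega
            · intro heven
              have := h3.2 (by simp [Nat.not_odd_iff_even, heven])
              omega
          · intro k hk
            have h4 := hff k (by omega)
            have h6 := hδv k (by omega)
            have h7 := hd k (by omega)
            have h9 := hb3 k hk
            constructor
            · intro hodd
              have := h4.1 hodd
              omega
            · intro heven
              have := h4.2 (by simp [Nat.not_odd_iff_even, heven])
              omega
        exact absurd hxyeq (ne_of_lt hxy)
      · exact Gval_lt d p hp hsum e f he hf hPPe n hn1 hagree hlt hb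
    · exact absurd heq hnne
    · -- impossible : would give y ≤ x
      exfalso
      have hyx : negaVal d δ ≤ negaVal d ε := by
        apply negaVal_le d hd δ ε hδv hεv n hn1 (fun k h1 h2 => (hεδagree k h1 h2).symm)
        constructor
        · intro hodd
          have := heen.1 hodd
          have := hffn.1 hodd
          omega
        · intro heven
          have := heen.2 (by simp [Nat.not_odd_iff_even, heven])
          have := hffn.2 (by simp [Nat.not_odd_iff_even, heven])
          omega
      rw [← hεx, ← hδy] at hyx
      linarith
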